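/- Let Φ = (φ_{ij}) be a symmetric 2×2 polynomial matrix and ρ a C¹ positive function on a domain Ω ⊂ ℝ² satisfying the Pearson equation div(ρΦ) = ρ(ψ₁, ψ₂), i.e., ∂_x(ρφ₁₁) + ∂_y(ρφ₂₁) = ρψ₁ and ∂_x(ρφ₁₂) + ∂_y(ρφ₂₂) = ρψ₂. Suppose moreover Φ satisfies φ₁₁ ∂_xΦ + φ₂₁ ∂_yΦ = Φ∇(φ₁₁, φ₂₁) and φ₁₂ ∂_xΦ + φ₂₂ ∂_yΦ = Φ∇(φ₁₂, φ₂₂). Then ρ₁ := ρΦ satisfies the matrix Pearson equation div(ρ₁ ⊗ Φ) = ρ₁(ψ₁^{(1)}, ψ₂^{(1)}), where ψ₁^{(1)} = I₂ ⊗ ψ₁ + ∇(φ₁₁, φ₂₁) ⊗ I₁ and ψ₂^{(1)} = I₂ ⊗ ψ₂ + ∇(φ₁₂, φ₂₂) ⊗ I₁ (these are 2×2 polynomial matrices). -/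

import Mathlib

open Matrix MvPolynomial
open scoped Kronecker

noncomputable section

abbrev F2 : Type := ℝ × ℝ → ℝ

/-- Evaluation of a polynomial in two variables as a function on `ℝ²`. -/
def toFun (q : MvPolynomial (Fin 2) ℝ) : F2 := fun z => MvPolynomial.eval ![z.1, z.2] q

/-- Partial derivative with respect to the first coordinate. -/
def pdx (f : F2) : F2 := fun z => fderiv ℝ f z (1, 0)

/-- Partial derivative with respect to the second coordinate. -/
def pdy (f : F2) : F2 := fun z => fderiv ℝ f z (0, 1)

/-- The block divergence: for a matrix with rows indexed by `Fin 2 × a`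
(two stacked block rows), `divM S = ∂ₓ(top block) + ∂_y(bottom block)`. -/
def divM {a b : Type*} (S : Matrix (Fin 2 × a) b F2) : Matrix a b F2 :=
  Matrix.of fun i j => pdx (S (0, i) j) + pdy (S (1, i) j)

/-- `∇(φ_{1,c+1}, φ_{2,c+1})`, the `2 × 2` matrix whose columns are the gradients of
the entries of the `c`-th column of `Φ`. -/
def gradPair (Φ : Matrix (Fin 2) (Fin 2) (MvPolynomial (Fin 2) ℝ)) (c : Fin 2) :
    Matrix (Fin 2) (Fin 2) F2 :=
  Matrix.of fun a b => (if a = 0 then pdx else pdy) (toFun (Φ b c))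

lemma toFun_differentiable (q : MvPolynomial (Fin 2) ℝ) : Differentiable ℝ (toFun q) := by
  induction q using MvPolynomial.induction_on with
  | C a =>
      have h : toFun (C a) = fun _ => a := by funext z; simp [toFun]
      rw [h]; exact differentiable_const a
  | add p q hp hq =>
      have h : toFun (p + q) = fun z => toFun p z + toFun q z := by
        funext z; simp [toFun]
      rw [h]; exact hp.add hq
  | mul_X p i hp =>
      have h : toFun (p * X i) = fun z => toFun p z * toFun (X i) z := by
        funext z; simp [toFun]
      rw [h]
      refine hp.mul ?_
      have h2 : toFun (X i) = fun z : ℝ × ℝ => (![z.1, z.2] : Fin 2 → ℝ) i := by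
        funext z; simp [toFun]
      rw [h2]
      fin_cases i
      · simpa using differentiable_fst
      · simpa using differentiable_snd

lemma pdx_mul (f g : F2) (z : ℝ × ℝ) (hf : DifferentiableAt ℝ f z)
    (hg : DifferentiableAt ℝ g z) :
    pdx (fun w => f w * g w) z = pdx f z * g z + f z * pdx g z := by
  unfold pdx
  rw [fderiv_fun_mul hf hg]
  simp only [ContinuousLinearMap.add_apply, ContinuousLinearMap.coe_smul', Pi.smul_apply,
    smul_eq_mul]
  ring

lemma pdy_mul (f g : F2) (z : ℝ × ℝ) (hf : DifferentiableAt ℝ f z)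
    (hg : DifferentiableAt ℝ g z) :
    pdy (fun w => f w * g w) z = pdy f z * g z + f z * pdy g z := by
  unfold pdy
  rw [fderiv_fun_mul hf hg]
  simp only [ContinuousLinearMap.add_apply, ContinuousLinearMap.coe_smul', Pi.smul_apply,
    smul_eq_mul]
  ring

/-- If the symmetric polynomial matrix `Φ` and the `C¹` weight `ρ` satisfy the
Pearson equation `div(ρΦ) = ρ(ψ₁,ψ₂)` on an open `Ω` together with the structural
conditions `φ_{1,c}∂ₓΦ + φ_{2,c}∂_yΦ = Φ∇(φ_{1,c}, φ_{2,c})` (`c = 1,2`), then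
`ρ₁ := ρΦ` satisfies the matrix Pearson equation
`div(ρ₁ ⊗ Φ) = ρ₁ (ψ₁^{(1)}, ψ₂^{(1)})` with
`ψ_c^{(1)} = ψ_c · I₂ + ∇(φ_{1,c}, φ_{2,c})`. -/
theorem pearson_step
    (Ω : Set (ℝ × ℝ)) (hΩ : IsOpen Ω)
    (ρ : ℝ × ℝ → ℝ) (hρ : ContDiffOn ℝ 1 ρ Ω) (hρpos : ∀ z ∈ Ω, 0 < ρ z)
    (Φ : Matrix (Fin 2) (Fin 2) (MvPolynomial (Fin 2) ℝ)) (hΦ : Φᵀ = Φ)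
    (ψ : Fin 2 → MvPolynomial (Fin 2) ℝ)
    (hPearson : ∀ c : Fin 2, ∀ z ∈ Ω,
      pdx (fun w => ρ w * toFun (Φ 0 c) w) z + pdy (fun w => ρ w * toFun (Φ 1 c) w) z
        = ρ z * toFun (ψ c) z)
    (hstruct : ∀ c : Fin 2, ∀ i j : Fin 2, ∀ z ∈ Ω,
      toFun (Φ 0 c) z * pdx (toFun (Φ i j)) z + toFun (Φ 1 c) z * pdy (toFun (Φ i j)) z
        = (Φ.map toFun * gradPair Φ c) i j z) :
    ∀ c i j : Fin 2, ∀ z ∈ Ω,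
      divM ((Matrix.of fun i' j' : Fin 2 => fun w => ρ w * toFun (Φ i' j') w)
          ⊗ₖ Φ.map toFun) i (c, j) z
        = ((Matrix.of fun i' j' : Fin 2 => fun w => ρ w * toFun (Φ i' j') w)
            * (toFun (ψ c) • (1 : Matrix (Fin 2) (Fin 2) F2) + gradPair Φ c)) i j z := by
  intro c i j z hz
  have hρd : DifferentiableAt ℝ ρ z :=
    (hρ.contDiffAt (hΩ.mem_nhds hz)).differentiableAt one_ne_zero
  have hP := hPearson c z hz
  have hS := hstruct c i j z hz
  have hf0 : DifferentiableAt ℝ (fun w => ρ w * toFun (Φ 0 c) w) z :=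
    hρd.mul ((toFun_differentiable (Φ 0 c)) z)
  have hf1 : DifferentiableAt ℝ (fun w => ρ w * toFun (Φ 1 c) w) z :=
    hρd.mul ((toFun_differentiable (Φ 1 c)) z)
  have hg : DifferentiableAt ℝ (toFun (Φ i j)) z := (toFun_differentiable (Φ i j)) z
  have hL : divM ((Matrix.of fun i' j' : Fin 2 => fun w => ρ w * toFun (Φ i' j') w)
          ⊗ₖ Φ.map toFun) i (c, j) z
      = pdx (fun w => (ρ w * toFun (Φ 0 c) w) * toFun (Φ i j) w) z
        + pdy (fun w => (ρ w * toFun (Φ 1 c) w) * toFun (Φ i j) w) z := by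
    simp only [divM, Matrix.of_apply, Matrix.kroneckerMap_apply, Matrix.map_apply,
      Pi.add_apply]
    rfl
  rw [hL, pdx_mul _ _ z hf0 hg, pdy_mul _ _ z hf1 hg]
  rw [Matrix.mul_apply]
  have hS' : toFun (Φ 0 c) z * pdx (toFun (Φ i j)) z
      + toFun (Φ 1 c) z * pdy (toFun (Φ i j)) z
      = toFun (Φ i 0) z * gradPair Φ c 0 j z + toFun (Φ i 1) z * gradPair Φ c 1 j z := by
    rw [hS, Matrix.mul_apply, Fin.sum_univ_two]
    simp [Matrix.map_apply]
  fin_cases j <;>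
  · simp only [Fin.sum_univ_two, Matrix.add_apply, Matrix.smul_apply, Matrix.one_apply,
      Matrix.of_apply, Pi.add_apply, Pi.smul_apply, Pi.mul_apply, Finset.sum_apply,
      smul_eq_mul, Fin.isValue, Pi.one_apply, Pi.zero_apply, Fin.mk_zero, Fin.mk_one] at *
    norm_num
    linear_combination toFun (Φ i _) z * hP + ρ z * hS'

end
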